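/- arXiv:1709.07999 — 2 statements merged into one kernel-verified Lean document; each statement's English description precedes it below -/
import Mathlib

section
/- For all 0 ≤ k ≤ n, the horizontal recurrence W_{m,r,q}(n,k) = ∑_{j=0}^{n-k} (-1)^j q^{C(k,2) - C(k+j+1,2)} (∏_{i=k+1}^{k+j} (m[i]_q + r)) W_{m,r,q}(n+1, k+j+1) holds, assuming m[i]_q + r ≠ 0 for all relevant i. -/
open Finset

noncomputable def qint (q : ℂ) (n : ℕ) : ℂ := (q ^ n - 1) / (q - 1)

/-- (q,r)-Whitney numbers of the first kind, via the triangular recurrence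
`w(n+1,k) = q^{-n} (w(n,k-1) - (m[n]_q + r) w(n,k))`, with `w(0,0)=1` and
`w(n,k)=0` for `k>n` (the `k<0` values are zero, absorbed in the `k=0` case). -/
noncomputable def qw (q m r : ℂ) : ℕ → ℕ → ℂ
  | 0, 0 => 1
  | 0, _ + 1 => 0
  | n + 1, 0 => q ^ (-(n : ℤ)) * (0 - (m * qint q n + r) * qw q m r n 0)
  | n + 1, k + 1 => q ^ (-(n : ℤ)) * (qw q m r n k - (m * qint q n + r) * qw q m r n (k + 1))

/-- (q,r)-Whitney numbers of the second kind, via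
`W(n+1,k) = q^{k-1} W(n,k-1) + (m[k]_q + r) W(n,k)`, with `W(0,0)=1`. -/
noncomputable def qW (q m r : ℂ) : ℕ → ℕ → ℂ
  | 0, 0 => 1
  | 0, _ + 1 => 0
  | n + 1, 0 => (m * qint q 0 + r) * qW q m r n 0
  | n + 1, k + 1 => q ^ k * qW q m r n k + (m * qint q (k + 1) + r) * qW q m r n (k + 1)

lemma qW_eq_zero (q m r : ℂ) : ∀ n k, n < k → qW q m r n k = 0 := by
  intro n
  induction n with
  | zero =>
    intro k hk
    match k, hk with
    | k + 1, _ => rfl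
  | succ n ih =>
    intro k hk
    match k, hk with
    | k + 1, hk =>
      show q ^ k * qW q m r n k + (m * qint q (k + 1) + r) * qW q m r n (k + 1) = 0
      rw [ih k (by omega), ih (k + 1) (by omega)]
      ring

theorem stmt6 (q m r : ℂ) (hq0 : q ≠ 0) (hq1 : q ≠ 1)
    (hmr : ∀ i : ℕ, m * qint q i + r ≠ 0) (n k : ℕ) (hkn : k ≤ n) :
    qW q m r n k =
      ∑ j ∈ Finset.range (n - k + 1), (-1) ^ j *
        q ^ ((k.choose 2 : ℤ) - ((k + j + 1).choose 2 : ℤ)) *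
        (∏ i ∈ Finset.Icc (k + 1) (k + j), (m * qint q i + r)) *
        qW q m r (n + 1) (k + j + 1) := by
  set f : ℕ → ℂ := fun j => (-1) ^ j *
      q ^ ((k.choose 2 : ℤ) - ((k + j).choose 2 : ℤ)) *
      (∏ i ∈ Finset.Icc (k + 1) (k + j), (m * qint q i + r)) *
      qW q m r n (k + j) with hf
  have key : ∀ j : ℕ, (-1 : ℂ) ^ j *
        q ^ ((k.choose 2 : ℤ) - ((k + j + 1).choose 2 : ℤ)) *
        (∏ i ∈ Finset.Icc (k + 1) (k + j), (m * qint q i + r)) *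
        qW q m r (n + 1) (k + j + 1) = f j - f (j + 1) := by
    intro j
    have hW : qW q m r (n + 1) (k + j + 1) =
        q ^ (k + j) * qW q m r n (k + j) +
          (m * qint q (k + j + 1) + r) * qW q m r n (k + j + 1) := rfl
    have hchoose : ((k + j + 1).choose 2 : ℤ) = ((k + j).choose 2 : ℤ) + (k + j) := by
      have : (k + j + 1).choose 2 = (k + j).choose 1 + (k + j).choose 2 :=
        Nat.choose_succ_succ (k + j) 1
      rw [this, Nat.choose_one_right]
      push_cast
      ring
    have hpow : q ^ ((k.choose 2 : ℤ) - ((k + j + 1).choose 2 : ℤ)) * q ^ (k + j) =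
        q ^ ((k.choose 2 : ℤ) - ((k + j).choose 2 : ℤ)) := by
      rw [← zpow_natCast q (k + j), ← zpow_add₀ hq0, hchoose]
      congr 1
      push_cast
      ring
    have hprod : (∏ i ∈ Finset.Icc (k + 1) (k + (j + 1)), (m * qint q i + r)) =
        (∏ i ∈ Finset.Icc (k + 1) (k + j), (m * qint q i + r)) *
          (m * qint q (k + j + 1) + r) := by
      rw [show k + (j + 1) = (k + j) + 1 by ring,
        Finset.prod_Icc_succ_top (by omega : k + 1 ≤ k + j + 1)]
    rw [hf]
    simp only [hW]
    rw [show k + (j + 1) = k + j + 1 by ring] at *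
    rw [hprod]
    rw [pow_succ]
    rw [mul_add, ← hpow]
    ring
  rw [Finset.sum_congr rfl (fun j _ => key j), Finset.sum_range_sub' f]
  have h0 : f 0 = qW q m r n k := by
    simp [hf]
  have h1 : f (n - k + 1) = 0 := by
    rw [hf]
    simp only
    rw [show k + (n - k + 1) = n + 1 by omega, qW_eq_zero q m r n (n + 1) (by omega)]
    ring
  rw [h0, h1, sub_zero]
end

section
/- For all 0 ≤ k ≤ n, w_{m,r,q}(n,k) = (-1)^{n-k} q^{-C(n,2)} e_{n-k}(r + [0]_q m, r + [1]_q m, ..., r + [n-1]_q m), i.e., the sum over all strictly increasing sequences 0 ≤ i_1 < i_2 < ... < i_{n-k} ≤ n-1 of the products ∏_{j=1}^{n-k} (r + [i_j]_q m). -/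
open Finset

noncomputable def E (q m r : ℂ) (n j : ℕ) : ℂ :=
  ∑ s ∈ Finset.powersetCard j (Finset.range n), ∏ i ∈ s, (r + qint q i * m)

lemma E_zero (q m r : ℂ) (n : ℕ) : E q m r n 0 = 1 := by
  simp [E]

lemma E_of_gt (q m r : ℂ) {n j : ℕ} (h : n < j) : E q m r n j = 0 := by
  rw [E, Finset.powersetCard_eq_empty.2 (by simpa using h), Finset.sum_empty]

lemma E_succ (q m r : ℂ) (n j : ℕ) :
    E q m r (n + 1) (j + 1) = E q m r n (j + 1) + (r + qint q n * m) * E q m r n j := by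
  have hn : (n : ℕ) ∉ Finset.range n := by simp
  rw [E, Finset.range_add_one, Finset.powersetCard_succ_insert hn,
    Finset.sum_union, Finset.sum_image]
  · rw [E, E, Finset.mul_sum]
    congr 1
    refine Finset.sum_congr rfl fun s hs => ?_
    rw [Finset.prod_insert]
    intro hns
    exact hn ((Finset.mem_powersetCard.1 hs).1 hns)
  · intro s hs t ht hst
    have hs' := (Finset.mem_powersetCard.1 hs).1
    have ht' := (Finset.mem_powersetCard.1 ht).1
    ext a
    constructor <;> intro ha
    · have : a ∈ insert n t := hst ▸ Finset.mem_insert_of_mem ha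
      rcases Finset.mem_insert.1 this with h | h
      · exact absurd (h ▸ ha) (fun hh => hn (hs' hh))
      · exact h
    · have : a ∈ insert n s := hst ▸ Finset.mem_insert_of_mem ha
      rcases Finset.mem_insert.1 this with h | h
      · exact absurd (h ▸ ha) (fun hh => hn (ht' hh))
      · exact h
  · rw [Finset.disjoint_left]
    intro s hs hs'
    obtain ⟨t, ht, rfl⟩ := Finset.mem_image.1 hs'
    exact hn ((Finset.mem_powersetCard.1 hs).1 (Finset.mem_insert_self n t))

lemma qw_of_gt (q m r : ℂ) : ∀ n k, n < k → qw q m r n k = 0 := by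
  intro n
  induction n with
  | zero => intro k hk; match k, hk with | j+1, _ => rfl
  | succ n ih =>
    intro k hk
    match k, hk with
    | j+1, hk =>
      have hj : n < j := by omega
      show q ^ (-(n : ℤ)) * (qw q m r n j - (m * qint q n + r) * qw q m r n (j + 1)) = 0
      rw [ih j hj, ih (j+1) (by omega)]
      ring

lemma choose_succ (n : ℕ) : (((n+1).choose 2 : ℕ) : ℤ) = (n.choose 2 : ℤ) + n := by
  rw [Nat.choose_succ_succ]
  push_cast [Nat.choose_one_right]
  ring

lemma key (q m r : ℂ) (hq0 : q ≠ 0) : ∀ n k, k ≤ n →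
    qw q m r n k = (-1) ^ (n - k) * q ^ (-(n.choose 2 : ℤ)) * E q m r n (n - k) := by
  intro n
  induction n with
  | zero =>
    intro k hk
    interval_cases k
    simp [qw, E_zero]
  | succ n ih =>
    intro k hk
    have hpow : q ^ (-(((n+1).choose 2 : ℕ) : ℤ)) = q ^ (-(n.choose 2 : ℤ)) * q ^ (-(n : ℤ)) := by
      rw [← zpow_add₀ hq0, ← neg_add, choose_succ]
    match k with
    | 0 =>
      show q ^ (-(n : ℤ)) * (0 - (m * qint q n + r) * qw q m r n 0) = _
      rw [ih 0 (Nat.zero_le n)]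
      have h1 : n + 1 - 0 = (n - 0) + 1 := by omega
      rw [h1, E_succ, E_of_gt q m r (by omega : n < n - 0 + 1)]
      simp only [Nat.sub_zero, pow_succ, hpow]
      ring
    | k + 1 =>
      show q ^ (-(n : ℤ)) * (qw q m r n k - (m * qint q n + r) * qw q m r n (k + 1)) = _
      rcases Nat.lt_or_ge k n with hkn | hkn
      · obtain ⟨d, hd⟩ : ∃ d, n - (k+1) = d := ⟨_, rfl⟩
        have h1 : n - k = d + 1 := by omega
        have h2 : n + 1 - (k + 1) = d + 1 := by omega
        rw [ih k (by omega), ih (k+1) (by omega), h1, hd, h2, E_succ, hpow, pow_succ]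
        ring
      · have hk' : k = n := by omega
        subst hk'
        rw [qw_of_gt q m r k (k+1) (by omega), ih k le_rfl]
        simp only [Nat.sub_self, E_zero, Nat.add_sub_cancel, hpow, pow_zero]
        ring

theorem stmt8 (q m r : ℂ) (hq0 : q ≠ 0) (hq1 : q ≠ 1) (n k : ℕ) (hkn : k ≤ n) :
    qw q m r n k =
      (-1) ^ (n - k) * q ^ (-(n.choose 2 : ℤ)) *
        ∑ s ∈ Finset.powersetCard (n - k) (Finset.range n),
          ∏ i ∈ s, (r + qint q i * m) := by
  exact key q m r hq0 n k hkn
end
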